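/- Fix g > 0, α ≠ 0. Let φ, φₜ : ℝ² → ℝ be differentiable with ∇φ, ∇φₜ square-integrable on Ω and traces square-integrable on (0,1), and let η, ηₜ, λ : (0,1) → ℝ be square-integrable. Assume (i) the reconstructed Lagrange multiplier identity holds when tested with φₜ: (φₜ, λ)_Γ = −(∇φₜ, ∇φ)_Ω, and (ii) the modified free-surface equations hold weakly: for every square-integrable w : (0,1) → ℝ, (w, φₜ + g·η)_Γ = 0, and for every square-integrable v : (0,1) → ℝ, (v, ηₜ + λ)_Γ = 0 (here φₜ and φ in boundary inner products denote traces). Then total energy is conserved: (∇φₜ, ∇φ)_Ω + g·(η, ηₜ)_Γ = 0. -/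

import Mathlib

open MeasureTheory Real Set

noncomputable section

/-- The computational domain `Ω = (0,1) × (0,1) ⊂ ℝ²`. -/
def Om : Set (ℝ × ℝ) := Ioo (0:ℝ) 1 ×ˢ Ioo (0:ℝ) 1

/-- Partial derivative in the horizontal direction `x`. -/
def pdx (w : ℝ × ℝ → ℝ) (p : ℝ × ℝ) : ℝ := fderiv ℝ w p (1, 0)

/-- Partial derivative in the vertical direction `z`. -/
def pdz (w : ℝ × ℝ → ℝ) (p : ℝ × ℝ) : ℝ := fderiv ℝ w p (0, 1)

/-- Interior inner product `(∇w, ∇φ)_Ω = ∫_Ω ∇w·∇φ`. -/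
def ipOm (w φ : ℝ × ℝ → ℝ) : ℝ := ∫ p in Om, (pdx w p * pdx φ p + pdz w p * pdz φ p)

/-- Free-surface inner product `(a, b)_Γ = ∫₀¹ a(x) b(x) dx`. -/
def ipGa (a b : ℝ → ℝ) : ℝ := ∫ x in Ioo (0:ℝ) 1, a x * b x

/-- The trace of `w : ℝ² → ℝ` on the free surface `Γ` (the top edge `z = 1`). -/
def tr (w : ℝ × ℝ → ℝ) : ℝ → ℝ := fun x => w (x, 1)

/-- The gradient of `w` is square-integrable on `Ω`. -/
def GradL2 (w : ℝ × ℝ → ℝ) : Prop :=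
  MemLp (pdx w) 2 (volume.restrict Om) ∧ MemLp (pdz w) 2 (volume.restrict Om)

/-- The trace of `w` on the free surface is square-integrable on `(0,1)`. -/
def TraceL2 (w : ℝ × ℝ → ℝ) : Prop :=
  MemLp (tr w) 2 (volume.restrict (Ioo (0:ℝ) 1))

/-- A boundary function `v : (0,1) → ℝ` is square-integrable. -/
def BdryL2 (v : ℝ → ℝ) : Prop :=
  MemLp v 2 (volume.restrict (Ioo (0:ℝ) 1))

/-- The time-discrete monolithic bilinear form with parameter `α`:
`B_m(W,Φ) = (∇w,∇φ)_Ω − (2/Δt)(w,η)_Γ + (1/2)(v + (α/g)w, (2/Δt)φ + gη)_Γ`. -/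
def Bm (g Δt α : ℝ) (w : ℝ × ℝ → ℝ) (v : ℝ → ℝ) (φ : ℝ × ℝ → ℝ) (η : ℝ → ℝ) : ℝ :=
  ipOm w φ - (2 / Δt) * ipGa (tr w) η
    + (1 / 2) * ipGa (fun x => v x + (α / g) * tr w x)
        (fun x => (2 / Δt) * tr φ x + g * η x)

lemma bdry_mul_integrable {a b : ℝ → ℝ}
    (ha : MemLp a 2 (volume.restrict (Ioo (0:ℝ) 1)))
    (hb : MemLp b 2 (volume.restrict (Ioo (0:ℝ) 1))) :
    Integrable (fun x => a x * b x) (volume.restrict (Ioo (0:ℝ) 1)) := by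
  have h : MemLp (a • b) 1 (volume.restrict (Ioo (0:ℝ) 1)) :=
    MemLp.smul hb ha (hpqr := ⟨by rw [ENNReal.inv_two_add_inv_two, inv_one]⟩)
  exact memLp_one_iff_integrable.mp h

lemma ipGa_comm (a b : ℝ → ℝ) : ipGa a b = ipGa b a := by
  unfold ipGa; simp_rw [mul_comm]

/-- The segregated formulation with Lagrange-multiplier reconstruction recovers exact
energy conservation: if the reconstructed multiplier identity tested with `φₜ` holds and
the modified free-surface equations hold weakly, then
`(∇φₜ,∇φ)_Ω + g(η,ηₜ)_Γ = 0`. -/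
theorem segregated_LM_reconstruction_energy_conservation
    (g α : ℝ) (hg : 0 < g) (hα : α ≠ 0)
    (φ φt : ℝ × ℝ → ℝ) (η ηt lam : ℝ → ℝ)
    (hφ : Differentiable ℝ φ) (hφt : Differentiable ℝ φt)
    (hgφ : GradL2 φ) (hgφt : GradL2 φt)
    (htφ : TraceL2 φ) (htφt : TraceL2 φt)
    (hη : BdryL2 η) (hηt : BdryL2 ηt) (hlam : BdryL2 lam)
    (hLM : ipGa (tr φt) lam = - ipOm φt φ)
    (hdyn : ∀ w : ℝ → ℝ, BdryL2 w → ipGa w (fun x => tr φt x + g * η x) = 0)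
    (hkin : ∀ v : ℝ → ℝ, BdryL2 v → ipGa v (fun x => ηt x + lam x) = 0) :
    ipOm φt φ + g * ipGa η ηt = 0 := by
  have h1 : ipGa η ηt + ipGa η lam = 0 := by
    have := hkin η hη
    unfold ipGa at this ⊢
    rw [← integral_add (bdry_mul_integrable hη hηt) (bdry_mul_integrable hη hlam)]
    simpa [mul_add] using this
  have h2 : ipGa lam (tr φt) + g * ipGa lam η = 0 := by
    have h := hdyn lam hlam
    unfold ipGa at h ⊢
    rw [show (fun x => lam x * (fun x => tr φt x + g * η x) x)
        = fun x => lam x * tr φt x + g * (lam x * η x) by funext x; ring] at h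
    rwa [integral_add (bdry_mul_integrable hlam htφt)
        ((bdry_mul_integrable hlam hη).const_mul g), MeasureTheory.integral_const_mul] at h
  have h3 : ipGa lam (tr φt) = ipGa (tr φt) lam := ipGa_comm _ _
  have h4 : ipGa η lam = ipGa lam η := ipGa_comm _ _
  have h5 : g * (ipGa η ηt + ipGa η lam) = 0 := by rw [h1, mul_zero]
  rw [h3, hLM] at h2
  rw [h4] at h5
  nlinarith [h2, h5]
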